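/- Let X be a square integrable real random variable with mean zero and variance σ² > 0. Then for all real t, E[exp(tX − (t²/2)X²)] ≤ 1 + (t²/2)σ². -/

import Mathlib

open MeasureTheory ProbabilityTheory Real

lemma exp_key_bound (x : ℝ) : Real.exp (x - x ^ 2 / 2) ≤ 1 + x + x ^ 2 / 2 := by
  set u := x - x ^ 2 / 2 with hu
  have h1 : 1 - u ≤ Real.exp (-u) := by
    have := Real.add_one_le_exp (-u); linarith
  have h2 : Real.exp u * (1 - u) ≤ 1 := by
    calc Real.exp u * (1 - u) ≤ Real.exp u * Real.exp (-u) := by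
          exact mul_le_mul_of_nonneg_left h1 (Real.exp_pos u).le
      _ = 1 := by rw [← Real.exp_add]; simp
  have hpos : 0 < 1 - u := by rw [hu]; nlinarith [sq_nonneg (x - 1)]
  have hprod : (1 : ℝ) ≤ (1 + x + x ^ 2 / 2) * (1 - u) := by
    rw [hu]; nlinarith [sq_nonneg x, sq_nonneg (x ^ 2)]
  have h3 : Real.exp u * (1 - u) ≤ (1 + x + x ^ 2 / 2) * (1 - u) := le_trans h2 hprod
  exact le_of_mul_le_mul_right h3 hpos

/-- Lemma 2.1: if `X` is square integrable with mean zero and variance `σ² > 0`, then for all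
real `t`, `E[exp(t X − (t²/2) X²)] ≤ 1 + (t²/2) σ²`. -/
theorem expectation_exp_le_one_add_half_sq_var
    {Ω : Type*} {m0 : MeasurableSpace Ω} {μ : Measure Ω} [IsProbabilityMeasure μ]
    {X : Ω → ℝ} (hX : MemLp X 2 μ) (hmean : ∫ ω, X ω ∂μ = 0)
    {σ2 : ℝ} (hvar : ∫ ω, (X ω) ^ 2 ∂μ = σ2) (hσ2 : 0 < σ2) (t : ℝ) :
    ∫ ω, Real.exp (t * X ω - t ^ 2 / 2 * (X ω) ^ 2) ∂μ ≤ 1 + t ^ 2 / 2 * σ2 := by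
  have hX1 : Integrable X μ := hX.integrable (by norm_num)
  have hX2 : Integrable (fun ω => (X ω) ^ 2) μ := by
    have := hX.integrable_sq
    simpa [sq] using this
  -- dominating function
  have hdom : Integrable (fun ω => 1 + t * X ω + t ^ 2 / 2 * (X ω) ^ 2) μ := by
    exact ((integrable_const 1).add (hX1.const_mul t)).add (hX2.const_mul (t ^ 2 / 2))
  have hpt : ∀ ω, Real.exp (t * X ω - t ^ 2 / 2 * (X ω) ^ 2)
      ≤ 1 + t * X ω + t ^ 2 / 2 * (X ω) ^ 2 := by
    intro ω
    have := exp_key_bound (t * X ω)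
    have h : (t * X ω) - (t * X ω) ^ 2 / 2 = t * X ω - t ^ 2 / 2 * (X ω) ^ 2 := by ring
    rw [h] at this
    calc Real.exp (t * X ω - t ^ 2 / 2 * (X ω) ^ 2)
        ≤ 1 + t * X ω + (t * X ω) ^ 2 / 2 := this
      _ = 1 + t * X ω + t ^ 2 / 2 * (X ω) ^ 2 := by ring
  have hmeas : AEStronglyMeasurable (fun ω => Real.exp (t * X ω - t ^ 2 / 2 * (X ω) ^ 2)) μ := by
    exact (Real.continuous_exp.comp_aestronglyMeasurable
      (((hX.1.const_mul t).sub ((hX.1.pow 2).const_mul (t ^ 2 / 2)))))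
  have hint : Integrable (fun ω => Real.exp (t * X ω - t ^ 2 / 2 * (X ω) ^ 2)) μ := by
    refine hdom.mono' hmeas ?_
    filter_upwards with ω
    rw [Real.norm_eq_abs, abs_of_pos (Real.exp_pos _)]
    exact hpt ω
  calc ∫ ω, Real.exp (t * X ω - t ^ 2 / 2 * (X ω) ^ 2) ∂μ
      ≤ ∫ ω, (1 + t * X ω + t ^ 2 / 2 * (X ω) ^ 2) ∂μ := by
        exact integral_mono hint hdom hpt
    _ = 1 + t ^ 2 / 2 * σ2 := by
        have hA : Integrable (fun ω => 1 + t * X ω) μ := (integrable_const 1).add (hX1.const_mul t)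
        have e1 : ∫ ω, (1 + t * X ω + t ^ 2 / 2 * (X ω) ^ 2) ∂μ
            = (∫ ω, (1 + t * X ω) ∂μ) + ∫ ω, t ^ 2 / 2 * (X ω) ^ 2 ∂μ :=
          integral_add hA (hX2.const_mul (t ^ 2 / 2))
        have e2 : ∫ ω, (1 + t * X ω) ∂μ = (∫ ω, (1 : ℝ) ∂μ) + ∫ ω, t * X ω ∂μ :=
          integral_add (integrable_const 1) (hX1.const_mul t)
        rw [e1, e2, integral_const, integral_const_mul, integral_const_mul, hmean, hvar]
        simp
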